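/- Let p_0 be an odd positive integer and p = (p_0, p_1, …, p_n) a weight. If z, z' ∈ ℝ^{n+1} have all coordinates nonzero and for each j = 1,…,n there exists λ_j ∈ ℝ∖{0} with z_0^{a_{0j}} = λ_j (z'_0)^{a_{0j}} and z_j^{b_{0j}} = λ_j (z'_j)^{b_{0j}}, where a_{0j} = lcm(p_0,p_j)/p_0 and b_{0j} = lcm(p_0,p_j)/p_j, then there exists μ ∈ ℝ∖{0} with μ^{p_j} z'_j = z_j for all j = 0,…,n. (Hence ℝP(p) is reconstructible whenever some weight entry is odd.) -/

import Mathlib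

open Real in
lemma odd_pow_surj_real (k : ℕ) (hk : Odd k) (c : ℝ) : ∃ x : ℝ, x ^ k = c := by
  have hk0 : k ≠ 0 := by rintro rfl; simp [Nat.odd_iff] at hk
  rcases le_or_gt 0 c with hc | hc
  · exact ⟨c ^ ((k : ℝ)⁻¹), rpow_inv_natCast_pow hc hk0⟩
  · refine ⟨-((-c) ^ ((k : ℝ)⁻¹)), ?_⟩
    rw [hk.neg_pow, rpow_inv_natCast_pow (by linarith) hk0, neg_neg]

/-- If `p₀` is odd, `ℝP(p)` is reconstructible: if all coordinates of `z, z'`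
are nonzero and for each `j ≠ 0` the axis projections agree,
`z₀^{a₀ⱼ} = λⱼ (z'₀)^{a₀ⱼ}` and `zⱼ^{b₀ⱼ} = λⱼ (z'ⱼ)^{b₀ⱼ}`, where
`a₀ⱼ = lcm(p₀,pⱼ)/p₀` and `b₀ⱼ = lcm(p₀,pⱼ)/pⱼ`, then there is `μ ≠ 0` with
`μ^{pⱼ} z'ⱼ = zⱼ` for all `j`. -/
theorem real_reconstructible_odd_entry (n : ℕ) (p : Fin (n + 1) → ℕ)
    (hp : ∀ i, 0 < p i) (hodd : Odd (p 0))
    (z z' : Fin (n + 1) → ℝ) (hz : ∀ i, z i ≠ 0) (hz' : ∀ i, z' i ≠ 0)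
    (h : ∀ j : Fin (n + 1), j ≠ 0 → ∃ l : ℝ, l ≠ 0 ∧
      (z 0) ^ (Nat.lcm (p 0) (p j) / p 0) = l * (z' 0) ^ (Nat.lcm (p 0) (p j) / p 0) ∧
      (z j) ^ (Nat.lcm (p 0) (p j) / p j) = l * (z' j) ^ (Nat.lcm (p 0) (p j) / p j)) :
    ∃ mu : ℝ, mu ≠ 0 ∧ ∀ j : Fin (n + 1), mu ^ p j * z' j = z j := by
  obtain ⟨mu, hmu⟩ := odd_pow_surj_real (p 0) hodd (z 0 / z' 0)
  have hdiv : z 0 / z' 0 ≠ 0 := div_ne_zero (hz 0) (hz' 0)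
  have hmune : mu ≠ 0 := by
    intro h0
    rw [h0, zero_pow (hp 0).ne'] at hmu
    exact hdiv hmu.symm
  have hz0 : mu ^ p 0 * z' 0 = z 0 := by
    rw [hmu, div_mul_cancel₀ _ (hz' 0)]
  refine ⟨mu, hmune, fun j => ?_⟩
  rcases eq_or_ne j 0 with rfl | hj
  · exact hz0
  obtain ⟨l, hl, h0, hjeq⟩ := h j hj
  set a := Nat.lcm (p 0) (p j) / p 0 with ha
  set b := Nat.lcm (p 0) (p j) / p j with hb
  have hpa : p 0 * a = Nat.lcm (p 0) (p j) :=
    Nat.mul_div_cancel' (Nat.dvd_lcm_left _ _) 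
  have hpb : p j * b = Nat.lcm (p 0) (p j) :=
    Nat.mul_div_cancel' (Nat.dvd_lcm_right _ _)
  -- b divides p 0, hence is odd
  have hbdvd : b ∣ p 0 := by
    have := Nat.gcd_mul_lcm (p 0) (p j)
    refine ⟨Nat.gcd (p 0) (p j), ?_⟩
    have h1 : p j * (b * Nat.gcd (p 0) (p j)) = p j * p 0 := by
      rw [← mul_assoc, hpb, mul_comm (Nat.lcm _ _), this, mul_comm]
    exact Nat.eq_of_mul_eq_mul_left (hp j) h1.symm
  have hbodd : Odd b := by
    rw [Nat.odd_iff, ← Nat.not_even_iff] at hodd ⊢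
    exact fun hbe => hodd ((even_iff_two_dvd.mpr ((even_iff_two_dvd.mp hbe).trans hbdvd)))
  -- derive l = mu ^ lcm
  have hl' : l = mu ^ Nat.lcm (p 0) (p j) := by
    have hz0a : z 0 ^ a = mu ^ (p 0 * a) * z' 0 ^ a := by
      rw [← hz0, mul_pow, pow_mul]
    rw [hz0a, hpa] at h0
    exact (mul_right_cancel₀ (pow_ne_zero _ (hz' 0)) h0).symm
  have key : (z j) ^ b = (mu ^ p j * z' j) ^ b := by
    rw [hjeq, hl', ← hpb, pow_mul, mul_pow]
  exact ((hbodd.strictMono_pow (R := ℝ)).injective key).symm
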